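/- For every integer n, every z ∈ ℂ and every z̲ ∈ ℤ, the lens theta functions satisfy the quasi-periodicity relations θ_τ(z+rnτ, z̲) = θ_τ(z, z̲)·e^{−nπi(2z+τ(rn−1)+1)} and θ_σ(z+rnσ, z̲) = θ_σ(z, z̲)·e^{−nπi(2z+σ(rn−1)+1)}. -/

import Mathlib

open Complex

noncomputable section

/-- `π` as a complex number. -/
def cπ : ℂ := Real.pi

/-- The infinite q-Pochhammer symbol `(w;q)_∞ = ∏_{j=0}^∞ (1 - w q^j)`. -/
def pochinf (w q : ℂ) : ℂ := ∏' j : ℕ, (1 - w * q ^ j)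

/-- The theta function `θ(w|q) = (w;q)_∞ (q w⁻¹;q)_∞`. -/
def jtheta (w q : ℂ) : ℂ := pochinf w q * pochinf (q * w⁻¹) q

/-- `e^{2πi x}`. -/
def e2pi (x : ℂ) : ℂ := Complex.exp (2 * cπ * Complex.I * x)

/-- Normalisation `φ_τ` for the lens theta function `θ_τ`. -/
def phiTau (r : ℕ) (σ τ z zb : ℂ) : ℂ :=
  cπ * Complex.I / (6 * (r : ℂ)) *
    (3 * ((r : ℂ) + 1 - 2 * zb) * (2 * z + 1) - ((r : ℂ) ^ 2 - 1) * (σ - τ - 1) -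
      6 * zb * ((r : ℂ) - zb) * (τ + 1))

/-- Normalisation `φ_σ` for the lens theta function `θ_σ`. -/
def phiSigma (r : ℕ) (σ τ z zb : ℂ) : ℂ :=
  -(cπ * Complex.I / (6 * (r : ℂ))) *
    (3 * ((r : ℂ) - 1 - 2 * zb) * (2 * z - 1) - ((r : ℂ) ^ 2 - 1) * (σ - τ - 1) +
      6 * zb * ((r : ℂ) - zb) * (σ - 1))

/-- The lens theta function `θ_τ(z,z̲)`. -/
def thetaTau (r : ℕ) (σ τ z zb : ℂ) : ℂ :=
  Complex.exp (phiTau r σ τ z zb) * jtheta (e2pi (-z) * e2pi (τ * zb)) (e2pi (τ * (r : ℂ)))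

/-- The lens theta function `θ_σ(z,z̲)`. -/
def thetaSigma (r : ℕ) (σ τ z zb : ℂ) : ℂ :=
  Complex.exp (phiSigma r σ τ z zb) * jtheta (e2pi z * e2pi (σ * zb)) (e2pi (σ * (r : ℂ)))

/-- The infinite-product factor `γ_σ(z,z̲)` of the lens elliptic gamma function. -/
def gammaSigmaF (r : ℕ) (σ τ z zb : ℂ) : ℂ :=
  ∏' p : ℕ × ℕ,
    (1 - e2pi (-z) * e2pi (-(σ * zb)) * e2pi ((σ + τ) * ((p.1 : ℂ) + 1)) *
        e2pi (σ * (r : ℂ) * ((p.2 : ℂ) + 1))) /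
    (1 - e2pi z * e2pi (σ * zb) * e2pi ((σ + τ) * (p.1 : ℂ)) * e2pi (σ * (r : ℂ) * (p.2 : ℂ)))

/-- The infinite-product factor `γ_τ(z,z̲)` of the lens elliptic gamma function. -/
def gammaTauF (r : ℕ) (σ τ z zb : ℂ) : ℂ :=
  ∏' p : ℕ × ℕ,
    (1 - e2pi (-z) * e2pi (-(τ * ((r : ℂ) - zb))) * e2pi ((σ + τ) * ((p.1 : ℂ) + 1)) *
        e2pi (τ * (r : ℂ) * ((p.2 : ℂ) + 1))) /
    (1 - e2pi z * e2pi (τ * ((r : ℂ) - zb)) * e2pi ((σ + τ) * (p.1 : ℂ)) *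
        e2pi (τ * (r : ℂ) * (p.2 : ℂ)))

/-- Normalisation `φ_e` of the lens elliptic gamma function. -/
def phiE (r : ℕ) (σ τ z zb : ℂ) : ℂ :=
  cπ * Complex.I *
    (zb * (zb - (r : ℂ)) * (6 * z - 3 * σ - 3 * τ + (1 - σ + τ) * ((r : ℂ) - 2 * zb))) /
    (6 * (r : ℂ))

/-- The lens elliptic gamma function `Γ(z,z̲)`. -/
def lensGamma (r : ℕ) (σ τ z zb : ℂ) : ℂ :=
  Complex.exp (phiE r σ τ z zb) * gammaSigmaF r σ τ z zb * gammaTauF r σ τ z zb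

/-- The triple infinite product `g_σ(z,z̲;σ,τ,ω)`. -/
def gS (r : ℕ) (σ τ ω z zb : ℂ) : ℂ :=
  ∏' k : ℕ × ℕ × ℕ,
    (1 - e2pi z * e2pi (σ * zb) * e2pi (σ * (r : ℂ) * (k.1 : ℂ)) *
        e2pi ((σ + τ) * (k.2.1 : ℂ)) * e2pi ((σ + ω) * (k.2.2 : ℂ)))

/-- The triple infinite product `g_τ(z,z̲;σ,τ,ω)`. -/
def gT (r : ℕ) (σ τ ω z zb : ℂ) : ℂ :=
  ∏' k : ℕ × ℕ × ℕ,
    (1 - e2pi z * e2pi (τ * ((r : ℂ) - zb)) * e2pi (τ * (r : ℂ) * (k.1 : ℂ)) *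
        e2pi ((σ + τ) * (k.2.1 : ℂ)) * e2pi (ω * (k.2.2 : ℂ)))

/-- `γ⁺_σ(z,z̲;σ,τ,ω)`. -/
def gammaPlusSigma (r : ℕ) (σ τ ω z zb : ℂ) : ℂ :=
  gS r σ τ ω z zb * gS r σ τ ω (σ + τ + ω - z) ((r : ℂ) + 1 - zb)

/-- `γ⁺_τ(z,z̲;σ,τ,ω)`. -/
def gammaPlusTau (r : ℕ) (σ τ ω z zb : ℂ) : ℂ :=
  gT r σ τ ω z zb * gT r σ τ ω (σ + τ + ω - z) ((r : ℂ) - zb)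

/-- The multiple Bernoulli polynomial `B_{3,3}(z;ω₁,ω₂,ω₃)`. -/
def B33 (z w1 w2 w3 : ℂ) : ℂ :=
  z ^ 3 / (w1 * w2 * w3) - 3 * z ^ 2 * (w1 + w2 + w3) / (2 * (w1 * w2 * w3)) +
    z * ((w1 ^ 2 + w2 ^ 2 + w3 ^ 2) + 3 * (w1 * w2 + w1 * w3 + w2 * w3)) /
      (2 * (w1 * w2 * w3)) -
    (w1 + w2 + w3) * (w1 * w2 + w1 * w3 + w2 * w3) / (4 * (w1 * w2 * w3))

/-- The multiple Bernoulli polynomial `B_{4,4}(z;ω₁,ω₂,ω₃,ω₄)`. -/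
def B44 (z w1 w2 w3 w4 : ℂ) : ℂ :=
  z ^ 4 / (w1 * w2 * w3 * w4) -
    2 * z ^ 3 * (w1 + w2 + w3 + w4) / (w1 * w2 * w3 * w4) +
    z ^ 2 * ((w1 ^ 2 + w2 ^ 2 + w3 ^ 2 + w4 ^ 2) +
        3 * (w1 * w2 + w1 * w3 + w1 * w4 + w2 * w3 + w2 * w4 + w3 * w4)) /
      (w1 * w2 * w3 * w4) -
    z * (w1 + w2 + w3 + w4) *
        (w1 * w2 + w1 * w3 + w1 * w4 + w2 * w3 + w2 * w4 + w3 * w4) /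
      (w1 * w2 * w3 * w4) -
    ((w1 ^ 4 + w2 ^ 4 + w3 ^ 4 + w4 ^ 4) -
        5 * ((w1 * w2) ^ 2 + (w1 * w3) ^ 2 + (w1 * w4) ^ 2 + (w2 * w3) ^ 2 + (w2 * w4) ^ 2 +
            (w3 * w4) ^ 2) -
        15 * (w1 ^ 2 * (w2 * w3 + w2 * w4 + w3 * w4) + w2 ^ 2 * (w1 * w3 + w1 * w4 + w3 * w4) +
            w3 ^ 2 * (w1 * w2 + w1 * w4 + w2 * w4) + w4 ^ 2 * (w1 * w2 + w1 * w3 + w2 * w3)) -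
        45 * (w1 * w2 * w3 * w4)) /
      (30 * (w1 * w2 * w3 * w4))

/-- `S(z;σ,τ,ω) = (B_{4,4}(z;σ,τ,−1,ω) + B_{4,4}(z−1;σ,τ,−1,ω))/48`. -/
def Sfun (z a b c : ℂ) : ℂ := (B44 z a b (-1) c + B44 (z - 1) a b (-1) c) / 48

/-- `S₂(z,z̲;σ,τ,ω)`. -/
def S2 (r : ℕ) (σ τ ω z zb : ℂ) : ℂ :=
  Sfun (z + zb * σ) ((r : ℂ) * σ) (σ + τ) (ω + σ) +
    Sfun (z + ((r : ℂ) - zb) * τ) ((r : ℂ) * τ) (σ + τ) (ω - τ)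

/-- `T₂(z,z̲;σ,τ,ω)`. -/
def T2 (r : ℕ) (σ τ ω z zb : ℂ) : ℂ :=
  Sfun (z + zb * σ) ((r : ℂ) * σ) (σ + τ) ω +
    Sfun (z + ((r : ℂ) - zb) * τ) ((r : ℂ) * τ) (σ + τ) ω

/-- Normalisation `φ⁺(z,z̲;σ,τ,ω)` of the lens triple gamma function. -/
def phiPlus (r : ℕ) (σ τ ω z zb : ℂ) : ℂ :=
  2 * cπ * Complex.I *
    (T2 r (σ - 1 / 2) (τ + 1 / 2) ω z 0 - S2 r (σ - 1 / 2) (τ + 1 / 2) ω z zb)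

/-- The lens triple gamma function `Γ⁺_σ(z,z̲;σ,τ,ω)`. -/
def GammaPlusSigma (r : ℕ) (σ τ ω z zb : ℂ) : ℂ :=
  Complex.exp (phiPlus r σ τ ω z zb) * gammaPlusSigma r σ τ ω z zb

/-- The lens triple gamma function `Γ⁺_{στ}(z,z̲;σ,τ,ω,μ)`. -/
def GammaPlusSigmaTau (r : ℕ) (σ τ ω μ z zb : ℂ) : ℂ :=
  GammaPlusSigma r σ τ ω z zb * gammaPlusTau r σ τ μ z zb

/-- The prefactor `λ(σ,τ)`. -/
def lam (r : ℕ) (σ τ : ℂ) : ℂ :=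
  pochinf (e2pi ((r : ℂ) * σ)) (e2pi ((r : ℂ) * σ)) *
    pochinf (e2pi ((r : ℂ) * τ)) (e2pi ((r : ℂ) * τ))

/-- The shifted discrete summation variable `z̃`. -/
def zt (r : ℕ) (xb : Fin 8 → ℚ) (zb : ℕ) : ℚ :=
  (zb : ℚ) + ((r : ℚ) + (((r + 1) % 2 : ℕ) : ℚ)) * Int.fract (xb 1)

/-- The elliptic hypergeometric sum/integral `I(x,x̲)`. -/
def Ihyp (r : ℕ) (σ τ : ℂ) (x : Fin 8 → ℂ) (xb : Fin 8 → ℚ) : ℂ :=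
  lam r σ τ / 2 *
    ∑ zb ∈ Finset.range r, ∫ z in (0:ℝ)..(1:ℝ),
      (∏ j : Fin 8,
          lensGamma r σ τ (x j + (z : ℂ)) ((xb j + zt r xb zb : ℚ) : ℂ) *
            lensGamma r σ τ (x j - (z : ℂ)) ((xb j - zt r xb zb : ℚ) : ℂ)) /
      (lensGamma r σ τ (2 * (z : ℂ)) ((2 * zt r xb zb : ℚ) : ℂ) *
        lensGamma r σ τ (-(2 * (z : ℂ))) ((-(2 * zt r xb zb) : ℚ) : ℂ))

/-- The shifted theta product `θ_σ(x,x̲)_k = ∏_{j=0}^{k−1} θ_σ(x+jτ, x̲+j)`. -/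
def thetaK (r : ℕ) (σ τ x xb : ℂ) (k : ℕ) : ℂ :=
  ∏ j ∈ Finset.range k, thetaSigma r σ τ (x + (j : ℂ) * τ) (xb + (j : ℂ))

end


section AuxLemmas

set_option maxHeartbeats 1000000

open Complex Filter

noncomputable section

lemma multipliable_poch (w q : ℂ) (hq : ‖q‖ < 1) :
    Multipliable fun j : ℕ => 1 - w * q ^ j := by
  by_cases h : ∃ j, 1 - w * q ^ j = 0
  · obtain ⟨j0, hj0⟩ := h
    refine ⟨0, ?_⟩
    have : ∀ᶠ s : Finset ℕ in atTop, (0 : ℂ) = ∏ i ∈ s, (1 - w * q ^ i) := by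
      refine eventually_atTop.2 ⟨{j0}, fun s hs => ?_⟩
      exact (Finset.prod_eq_zero (i := j0) (by simpa using hs) hj0).symm
    exact tendsto_const_nhds.congr' this
  · push_neg at h
    refine Complex.multipliable_of_summable_log ?_
    have hg : Summable fun n : ℕ => (3 / 2 : ℝ) * (‖w‖ * ‖q‖ ^ n) :=
      ((summable_geometric_of_lt_one (norm_nonneg q) hq).mul_left ‖w‖).mul_left _
    refine hg.of_norm_bounded_eventually_nat ?_
    have h0 : Tendsto (fun n : ℕ => ‖w‖ * ‖q‖ ^ n) atTop (nhds 0) := by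
      simpa using (tendsto_pow_atTop_nhds_zero_of_lt_one (norm_nonneg q) hq).const_mul ‖w‖
    filter_upwards [h0.eventually_le_const (by norm_num : (0:ℝ) < 1/2)] with n hn
    have hb : ‖-(w * q ^ n)‖ ≤ 1 / 2 := by
      simpa [norm_mul, norm_pow] using hn
    have := Complex.norm_log_one_add_half_le_self hb
    rw [show 1 + -(w * q ^ n) = 1 - w * q ^ n by ring] at this
    calc ‖Complex.log (1 - w * q ^ n)‖ ≤ 3 / 2 * ‖-(w * q ^ n)‖ := this
      _ = 3 / 2 * (‖w‖ * ‖q‖ ^ n) := by simp [norm_mul, norm_pow]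

lemma pochinf_shift (w q : ℂ) (hq : ‖q‖ < 1) :
    pochinf w q = (1 - w) * pochinf (w * q) q := by
  have hm : Multipliable fun n : ℕ => 1 - w * q ^ (n + 1) :=
    (multipliable_poch (w * q) q hq).congr fun n => by ring
  rw [pochinf, tprod_eq_zero_mul' hm]
  congr 1
  · simp
  · rw [pochinf]
    refine tprod_congr fun n => ?_
    ring

lemma jtheta_step (w q : ℂ) (hq : ‖q‖ < 1) (hq0 : q ≠ 0) (hw : w ≠ 0) :
    jtheta (q * w) q = -w⁻¹ * jtheta w q := by
  have h1 : q * (q * w)⁻¹ = w⁻¹ := by field_simp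
  have h2 : w⁻¹ * q = q * w⁻¹ := by ring
  have h3 : (1 : ℂ) - w⁻¹ = -w⁻¹ * (1 - w) := by field_simp; ring
  rw [jtheta, h1, jtheta, show q * w = w * q from mul_comm q w,
    pochinf_shift w q hq, pochinf_shift w⁻¹ q hq, h2, h3]
  simp only [pochinf]
  ring

lemma exp_cpi : Complex.exp (cπ * Complex.I) = -1 := by
  simpa [cπ] using Complex.exp_pi_mul_I

lemma exp_two_cpi : Complex.exp (2 * cπ * Complex.I) = 1 := by
  simpa [cπ, mul_assoc] using Complex.exp_two_pi_mul_I

lemma norm_e2pi_lt_one {x : ℂ} (hx : 0 < x.im) : ‖e2pi x‖ < 1 := by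
  rw [e2pi, Complex.norm_exp]
  apply Real.exp_lt_one_iff.2 ?_
  have h : (2 * cπ * Complex.I * x).re = -(2 * Real.pi * x.im) := by
    simp [cπ, Complex.mul_re, Complex.mul_im]
  rw [h]
  have := Real.pi_pos
  nlinarith

lemma im_mul_nat (x : ℂ) (r : ℕ) (hx : 0 < x.im) (hr : 0 < r) : 0 < (x * (r : ℂ)).im := by
  have : (x * (r : ℂ)).im = x.im * r := by simp [Complex.mul_im]
  rw [this]
  positivity

lemma thetaSigma_step (r : ℕ) (hr : 0 < r) (σ τ : ℂ) (hσ : 0 < σ.im) (z zb : ℂ) :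
    thetaSigma r σ τ (z + (r : ℂ) * σ) zb =
      thetaSigma r σ τ z zb *
        Complex.exp (-cπ * Complex.I * (2 * z + σ * ((r : ℂ) - 1) + 1)) := by
  have hrc : (r : ℂ) ≠ 0 := Nat.cast_ne_zero.2 hr.ne'
  set q := e2pi (σ * (r : ℂ)) with hqdef
  set w := e2pi z * e2pi (σ * zb) with hwdef
  have hq : ‖q‖ < 1 := norm_e2pi_lt_one (im_mul_nat σ r hσ hr)
  have hq0 : q ≠ 0 := Complex.exp_ne_zero _
  have hw0 : w ≠ 0 := mul_ne_zero (Complex.exp_ne_zero _) (Complex.exp_ne_zero _)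
  have harg : e2pi (z + (r : ℂ) * σ) * e2pi (σ * zb) = q * w := by
    rw [hqdef, hwdef, e2pi, e2pi, e2pi, e2pi, ← Complex.exp_add, ← Complex.exp_add,
      ← Complex.exp_add]
    congr 1; ring
  have hw' : w = Complex.exp (2 * cπ * Complex.I * z + 2 * cπ * Complex.I * (σ * zb)) := by
    rw [hwdef, e2pi, e2pi, ← Complex.exp_add]
  have hwinv : -w⁻¹ = Complex.exp
      (cπ * Complex.I + -(2 * cπ * Complex.I * z + 2 * cπ * Complex.I * (σ * zb))) := by
    rw [Complex.exp_add, exp_cpi, hw', ← Complex.exp_neg]; ring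
  rw [thetaSigma, thetaSigma, harg, jtheta_step w q hq hq0 hw0, hwinv, ← mul_assoc,
    ← Complex.exp_add]
  have key : phiSigma r σ τ (z + (r : ℂ) * σ) zb +
      (cπ * Complex.I + -(2 * cπ * Complex.I * z + 2 * cπ * Complex.I * (σ * zb))) =
      (phiSigma r σ τ z zb + -cπ * Complex.I * (2 * z + σ * ((r : ℂ) - 1) + 1)) +
        2 * cπ * Complex.I := by
    simp only [phiSigma]
    field_simp
    ring
  rw [key, Complex.exp_add, exp_two_cpi, mul_one, Complex.exp_add]
  ring

lemma thetaTau_step (r : ℕ) (hr : 0 < r) (σ τ : ℂ) (hτ : 0 < τ.im) (z zb : ℂ) :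
    thetaTau r σ τ (z + (r : ℂ) * τ) zb =
      thetaTau r σ τ z zb *
        Complex.exp (-cπ * Complex.I * (2 * z + τ * ((r : ℂ) - 1) + 1)) := by
  have hrc : (r : ℂ) ≠ 0 := Nat.cast_ne_zero.2 hr.ne'
  set q := e2pi (τ * (r : ℂ)) with hqdef
  set w := e2pi (-z) * e2pi (τ * zb) with hwdef
  have hq : ‖q‖ < 1 := norm_e2pi_lt_one (im_mul_nat τ r hτ hr)
  have hq0 : q ≠ 0 := Complex.exp_ne_zero _
  have hw0 : w ≠ 0 := mul_ne_zero (Complex.exp_ne_zero _) (Complex.exp_ne_zero _)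
  have hqw0 : q⁻¹ * w ≠ 0 := mul_ne_zero (inv_ne_zero hq0) hw0
  have harg : e2pi (-(z + (r : ℂ) * τ)) * e2pi (τ * zb) = q⁻¹ * w := by
    rw [hqdef, hwdef, e2pi, e2pi, e2pi, e2pi, ← Complex.exp_neg, ← Complex.exp_add,
      ← Complex.exp_add, ← Complex.exp_add]
    congr 1; ring
  have h5 := jtheta_step (q⁻¹ * w) q hq hq0 hqw0
  rw [show q * (q⁻¹ * w) = w by field_simp] at h5
  have h7 : ∀ a J : ℂ, a ≠ 0 → -a * (-a⁻¹ * J) = J := by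
    intro a J ha
    field_simp
  have h6 : jtheta (q⁻¹ * w) q = -(q⁻¹ * w) * jtheta w q := by
    rw [h5, h7 _ _ hqw0]
  have hqw : -(q⁻¹ * w) = Complex.exp (cπ * Complex.I +
      (-(2 * cπ * Complex.I * (τ * (r : ℂ))) +
        (2 * cπ * Complex.I * (-z) + 2 * cπ * Complex.I * (τ * zb)))) := by
    rw [Complex.exp_add, exp_cpi, hqdef, hwdef, e2pi, e2pi, e2pi, ← Complex.exp_neg,
      ← Complex.exp_add, ← Complex.exp_add]
    ring
  rw [thetaTau, thetaTau, harg, h6, hqw, ← mul_assoc, ← Complex.exp_add]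
  have key : phiTau r σ τ (z + (r : ℂ) * τ) zb +
      (cπ * Complex.I + (-(2 * cπ * Complex.I * (τ * (r : ℂ))) +
        (2 * cπ * Complex.I * (-z) + 2 * cπ * Complex.I * (τ * zb)))) =
      (phiTau r σ τ z zb + -cπ * Complex.I * (2 * z + τ * ((r : ℂ) - 1) + 1)) +
        2 * cπ * Complex.I := by
    simp only [phiTau]
    field_simp
    ring
  rw [key, Complex.exp_add, exp_two_cpi, mul_one, Complex.exp_add]
  ring

end

noncomputable section

lemma thetaTau_quasi (r : ℕ) (hr : 0 < r) (σ τ : ℂ) (hτ : 0 < τ.im) (n : ℤ) (z zb : ℂ) :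
    thetaTau r σ τ (z + (r : ℂ) * (n : ℂ) * τ) zb =
      thetaTau r σ τ z zb *
        Complex.exp (-(n : ℂ) * cπ * Complex.I *
          (2 * z + τ * ((r : ℂ) * (n : ℂ) - 1) + 1)) := by
  induction n using Int.induction_on generalizing z with
  | zero => simp
  | succ i ih =>
    rw [show z + (r : ℂ) * (((i : ℤ) + 1 : ℤ) : ℂ) * τ
          = (z + (r : ℂ) * τ) + (r : ℂ) * ((i : ℤ) : ℂ) * τ by push_cast; ring,
      ih (z + (r : ℂ) * τ), thetaTau_step r hr σ τ hτ z zb, mul_assoc]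
    congr 1
    rw [← Complex.exp_add]
    congr 1
    push_cast
    ring
  | pred i ih =>
    rw [show z + (r : ℂ) * ((-(i : ℤ) - 1 : ℤ) : ℂ) * τ
          = (z - (r : ℂ) * τ) + (r : ℂ) * ((-(i : ℤ) : ℤ) : ℂ) * τ by push_cast; ring,
      ih (z - (r : ℂ) * τ)]
    have hstep := thetaTau_step r hr σ τ hτ (z - (r : ℂ) * τ) zb
    rw [show z - (r : ℂ) * τ + (r : ℂ) * τ = z by ring] at hstep
    have hstep' : thetaTau r σ τ (z - (r : ℂ) * τ) zb =
        thetaTau r σ τ z zb *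
          Complex.exp (cπ * Complex.I * (2 * (z - (r : ℂ) * τ) + τ * ((r : ℂ) - 1) + 1)) := by
      rw [hstep, mul_assoc, ← Complex.exp_add,
        show -cπ * Complex.I * (2 * (z - (r : ℂ) * τ) + τ * ((r : ℂ) - 1) + 1) +
          cπ * Complex.I * (2 * (z - (r : ℂ) * τ) + τ * ((r : ℂ) - 1) + 1) = 0 by ring,
        Complex.exp_zero, mul_one]
    rw [hstep', mul_assoc, ← Complex.exp_add]
    congr 1
    congr 1
    push_cast
    ring

lemma thetaSigma_quasi (r : ℕ) (hr : 0 < r) (σ τ : ℂ) (hσ : 0 < σ.im) (n : ℤ) (z zb : ℂ) :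
    thetaSigma r σ τ (z + (r : ℂ) * (n : ℂ) * σ) zb =
      thetaSigma r σ τ z zb *
        Complex.exp (-(n : ℂ) * cπ * Complex.I *
          (2 * z + σ * ((r : ℂ) * (n : ℂ) - 1) + 1)) := by
  induction n using Int.induction_on generalizing z with
  | zero => simp
  | succ i ih =>
    rw [show z + (r : ℂ) * (((i : ℤ) + 1 : ℤ) : ℂ) * σ
          = (z + (r : ℂ) * σ) + (r : ℂ) * ((i : ℤ) : ℂ) * σ by push_cast; ring,
      ih (z + (r : ℂ) * σ), thetaSigma_step r hr σ τ hσ z zb, mul_assoc]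
    congr 1
    rw [← Complex.exp_add]
    congr 1
    push_cast
    ring
  | pred i ih =>
    rw [show z + (r : ℂ) * ((-(i : ℤ) - 1 : ℤ) : ℂ) * σ
          = (z - (r : ℂ) * σ) + (r : ℂ) * ((-(i : ℤ) : ℤ) : ℂ) * σ by push_cast; ring,
      ih (z - (r : ℂ) * σ)]
    have hstep := thetaSigma_step r hr σ τ hσ (z - (r : ℂ) * σ) zb
    rw [show z - (r : ℂ) * σ + (r : ℂ) * σ = z by ring] at hstep
    have hstep' : thetaSigma r σ τ (z - (r : ℂ) * σ) zb =
        thetaSigma r σ τ z zb *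
          Complex.exp (cπ * Complex.I * (2 * (z - (r : ℂ) * σ) + σ * ((r : ℂ) - 1) + 1)) := by
      rw [hstep, mul_assoc, ← Complex.exp_add,
        show -cπ * Complex.I * (2 * (z - (r : ℂ) * σ) + σ * ((r : ℂ) - 1) + 1) +
          cπ * Complex.I * (2 * (z - (r : ℂ) * σ) + σ * ((r : ℂ) - 1) + 1) = 0 by ring,
        Complex.exp_zero, mul_one]
    rw [hstep', mul_assoc, ← Complex.exp_add]
    congr 1
    congr 1
    push_cast
    ring

end

end AuxLemmas

/-- quasi-periodicity of the lens theta functions. -/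
theorem lens_theta_quasi_periodicity (r : ℕ) (hr : 0 < r) (σ τ : ℂ)
    (hσ : 0 < σ.im) (hτ : 0 < τ.im) (n : ℤ) (z : ℂ) (zb : ℤ) :
    thetaTau r σ τ (z + (r : ℂ) * (n : ℂ) * τ) (zb : ℂ) =
      thetaTau r σ τ z (zb : ℂ) *
        Complex.exp (-(n : ℂ) * cπ * Complex.I *
          (2 * z + τ * ((r : ℂ) * (n : ℂ) - 1) + 1)) ∧
    thetaSigma r σ τ (z + (r : ℂ) * (n : ℂ) * σ) (zb : ℂ) =
      thetaSigma r σ τ z (zb : ℂ) *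
        Complex.exp (-(n : ℂ) * cπ * Complex.I *
          (2 * z + σ * ((r : ℂ) * (n : ℂ) - 1) + 1)) :=
  ⟨thetaTau_quasi r hr σ τ hτ n z zb, thetaSigma_quasi r hr σ τ hσ n z zb⟩
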